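/- Under Assumption (f L-smooth, g proper lsc, argmin(f+g) ≠ ∅), with γ and λ in the admissible range, the DRS sequence satisfies: for each k, dist(0, ∂̂(f+g)(vᵏ)) ≤ ((1 − γσ_f)/γ)‖uᵏ − vᵏ‖, where ∂̂ is the regular subdifferential. -/

import Mathlib

open Set Filter Topology

set_option maxHeartbeats 1000000

open RealInnerProductSpace

variable {E : Type*} [NormedAddCommGroup E] [InnerProductSpace ℝ E] [CompleteSpace E]

/-- helper: build HasGradientAt from HasFDerivAt with a pointwise inner formula -/
theorem myHasGradientAt {φ : E → ℝ} {A : E →L[ℝ] ℝ} {g x : E}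
    (h : HasFDerivAt φ A x) (hA : ∀ y, A y = ⟪g, y⟫) : HasGradientAt φ g x := by
  rw [hasGradientAt_iff_hasFDerivAt]
  have hd : InnerProductSpace.toDual ℝ E g = A := by
    ext y
    simp [InnerProductSpace.toDual_apply_apply, hA y]
  rw [hd]; exact h

/-- derivative along a line -/
theorem hasDerivAt_line {φ : E → ℝ} {φ' : E → E} (hdiff : ∀ x, HasGradientAt φ (φ' x) x)
    (x d : E) (t : ℝ) :
    HasDerivAt (fun t : ℝ => φ (x + t • d)) ⟪φ' (x + t • d), d⟫ t := by
  have hline : HasDerivAt (fun t : ℝ => x + t • d) d t := by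
    simpa using ((hasDerivAt_id t).smul_const d).const_add x
  have := ((hdiff (x + t • d)).hasFDerivAt).comp_hasDerivAt t hline
  simp only [InnerProductSpace.toDual_apply_apply] at this
  exact this

/-- descent lemma: M-Lipschitz gradient gives quadratic upper bound with M/2 -/
theorem descent_lemma {φ : E → ℝ} {φ' : E → E} {M : ℝ} (hM : 0 ≤ M)
    (hdiff : ∀ x, HasGradientAt φ (φ' x) x)
    (hlip : ∀ x y, ‖φ' x - φ' y‖ ≤ M * ‖x - y‖) (x y : E) :
    φ y ≤ φ x + ⟪φ' x, y - x⟫ + M / 2 * ‖y - x‖ ^ 2 := by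
  set d := y - x with hd
  set r : ℝ → ℝ := fun t => φ (x + t • d) - t * ⟪φ' x, d⟫ - M / 2 * ‖d‖ ^ 2 * t ^ 2 with hr
  have hrderiv : ∀ t : ℝ, HasDerivAt r
      (⟪φ' (x + t • d), d⟫ - ⟪φ' x, d⟫ - M * ‖d‖ ^ 2 * t) t := by
    intro t
    have h1 := hasDerivAt_line hdiff x d t
    have h2 : HasDerivAt (fun t : ℝ => t * ⟪φ' x, d⟫) ⟪φ' x, d⟫ t := by
      simpa using (hasDerivAt_id t).mul_const ⟪φ' x, d⟫
    have h3 : HasDerivAt (fun t : ℝ => M / 2 * ‖d‖ ^ 2 * t ^ 2) (M * ‖d‖ ^ 2 * t) t := by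
      have := (hasDerivAt_pow 2 t).const_mul (M / 2 * ‖d‖ ^ 2)
      exact this.congr_deriv (by ring)
    exact (h1.sub h2).sub h3
  have hderivle : ∀ t ∈ Set.Ioo (0:ℝ) 1, deriv r t ≤ 0 := by
    intro t ht
    rw [(hrderiv t).deriv]
    have h4 : ⟪φ' (x + t • d) - φ' x, d⟫ ≤ M * ‖d‖ ^ 2 * t := by
      calc ⟪φ' (x + t • d) - φ' x, d⟫ ≤ ‖φ' (x + t • d) - φ' x‖ * ‖d‖ :=
            real_inner_le_norm _ _
        _ ≤ (M * ‖x + t • d - x‖) * ‖d‖ := by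
            gcongr; exact hlip _ _
        _ = M * ‖d‖ ^ 2 * t := by
            simp [norm_smul, abs_of_pos ht.1]; ring
    have := inner_sub_left (𝕜 := ℝ) (φ' (x + t • d)) (φ' x) d
    nlinarith [h4, this]
  have hcont : ContinuousOn r (Set.Icc (0:ℝ) 1) := fun t _ =>
    ((hrderiv t).differentiableAt.continuousAt).continuousWithinAt
  have hanti : AntitoneOn r (Set.Icc (0:ℝ) 1) := by
    apply antitoneOn_of_deriv_nonpos (convex_Icc 0 1) hcont
    · intro t ht
      rw [interior_Icc] at ht
      exact (hrderiv t).differentiableAt.differentiableWithinAt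
    · intro t ht
      rw [interior_Icc] at ht
      exact hderivle t ht
  have h01 := hanti (Set.left_mem_Icc.2 zero_le_one) (Set.right_mem_Icc.2 zero_le_one) zero_le_one
  have hr0 : r 0 = φ x := by simp [hr]
  have hr1 : r 1 = φ y - ⟪φ' x, d⟫ - M / 2 * ‖d‖ ^ 2 := by simp [hr, hd]
  rw [hr0, hr1] at h01
  linarith

/-- gradient inequality for convex differentiable functions -/
theorem grad_ineq {φ : E → ℝ} {φ' : E → E} (hconv : ConvexOn ℝ Set.univ φ)
    (hdiff : ∀ x, HasGradientAt φ (φ' x) x) (x y : E) :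
    φ x + ⟪φ' x, y - x⟫ ≤ φ y := by
  rcases eq_or_ne y x with rfl | hne
  · simp
  set q : ℝ → ℝ := fun t => φ (x + t • (y - x)) with hq
  have hqconv : ConvexOn ℝ Set.univ q := by
    have := hconv.comp_affineMap (AffineMap.lineMap x y : ℝ →ᵃ[ℝ] E)
    simp only [Set.preimage_univ] at this
    suffices hqe : q = φ ∘ AffineMap.lineMap x y by rw [hqe]; exact this
    funext t
    simp [hq, AffineMap.lineMap_apply, Function.comp]
    congr 1
    module
  have hq0 : HasDerivAt q ⟪φ' x, y - x⟫ 0 := by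
    simpa using hasDerivAt_line hdiff x (y - x) 0
  have := hqconv.le_slope_of_hasDerivAt (Set.mem_univ (0:ℝ)) (Set.mem_univ (1:ℝ))
    zero_lt_one hq0
  rw [slope_def_field] at this
  have hq1 : q 1 = φ y := by simp [hq]
  have hq0' : q 0 = φ x := by simp [hq]
  rw [hq1, hq0'] at this
  simp at this
  linarith

/-- key cocoercivity-type lemma -/
theorem key_cocoercive {h : E → ℝ} {h' : E → E} {C a : ℝ} (hC : 0 ≤ C)
    (hconv : ConvexOn ℝ Set.univ h) (hdiff : ∀ x, HasGradientAt h (h' x) x)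
    (hdesc : ∀ x y, h y ≤ h x + ⟪h' x, y - x⟫ + C * ‖y - x‖ ^ 2)
    (haC : C ≤ a) (ha : 0 < a) (u v : E) :
    ‖h' u - h' v‖ ^ 2 ≤ 2 * a * ⟪h' u - h' v, u - v⟫ := by
  have main : ∀ p q : E, ∀ t : ℝ,
      h p - ⟪h' p, p⟫ ≤ h q - ⟪h' p, q⟫ - t * ‖h' q - h' p‖ ^ 2
        + C * t ^ 2 * ‖h' q - h' p‖ ^ 2 := by
    intro p q t
    have hφdiff : ∀ x, HasGradientAt (fun x => h x - ⟪h' p, x⟫) (h' x - h' p) x := by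
      intro x
      have hlin : HasGradientAt (fun x : E => ⟪h' p, x⟫) (h' p) x :=
        myHasGradientAt (innerSL ℝ (h' p)).hasFDerivAt (fun y => rfl)
      refine myHasGradientAt ((hdiff x).hasFDerivAt.sub hlin.hasFDerivAt) ?_
      intro y
      simp [InnerProductSpace.toDual_apply_apply, inner_sub_left]
    have hφconv : ConvexOn ℝ Set.univ (fun x => h x - ⟪h' p, x⟫) := by
      have hlc : ConvexOn ℝ Set.univ (fun x : E => ⟪-(h' p), x⟫) := by
        refine ⟨convex_univ, ?_⟩
        intro x _ y _ c b hc hb hcb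
        simp only [smul_eq_mul]
        rw [inner_add_right, real_inner_smul_right, real_inner_smul_right]
      have := hconv.add hlc
      suffices hqe : (fun x => h x - ⟪h' p, x⟫) = (h + fun x => ⟪-(h' p), x⟫) by
        rw [hqe]; exact this
      funext x
      simp only [Pi.add_apply, inner_neg_left]
      ring
    have hmin : h p - ⟪h' p, p⟫ ≤ (fun x => h x - ⟪h' p, x⟫) (q - t • (h' q - h' p)) := by
      have := grad_ineq hφconv hφdiff p (q - t • (h' q - h' p))
      have h0 : h' p - h' p = 0 := sub_self _
      rw [h0] at this
      simpa using this
    have hy := hdesc q (q - t • (h' q - h' p))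
    have e1 : q - t • (h' q - h' p) - q = -(t • (h' q - h' p)) := by abel
    have e2 : ⟪h' q, q - t • (h' q - h' p) - q⟫ = -(t * ⟪h' q, h' q - h' p⟫) := by
      rw [e1, inner_neg_right, inner_smul_right]
    have e3 : ‖q - t • (h' q - h' p) - q‖ ^ 2 = t ^ 2 * ‖h' q - h' p‖ ^ 2 := by
      rw [e1, norm_neg, norm_smul]
      simp [mul_pow, sq_abs]
    have e4 : ⟪h' p, q - t • (h' q - h' p)⟫ = ⟪h' p, q⟫ - t * ⟪h' p, h' q - h' p⟫ := by
      rw [inner_sub_right, inner_smul_right]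
    have e5 : ⟪h' q, h' q - h' p⟫ - ⟪h' p, h' q - h' p⟫ = ‖h' q - h' p‖ ^ 2 := by
      rw [← inner_sub_left, real_inner_self_eq_norm_sq]
    simp only [e2, e3, e4] at hy hmin ⊢
    have e6 : t * ⟪h' q, h' q - h' p⟫ - t * ⟪h' p, h' q - h' p⟫
        = t * ‖h' q - h' p‖ ^ 2 := by rw [← e5]; ring
    linarith [hy, hmin, e6]
  have hac : (0:ℝ) < a + C := by linarith
  set t : ℝ := 1 / (a + C) with ht
  have h1 := main v u t
  have h2 := main u v t
  have hnorm : ‖h' v - h' u‖ = ‖h' u - h' v‖ := norm_sub_rev _ _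
  set N : ℝ := ‖h' u - h' v‖ ^ 2 with hN
  set S : ℝ := ⟪h' u - h' v, u - v⟫ with hS
  have hsum : 2 * t * (1 - C * t) * N ≤ S := by
    have hexp : ⟪h' u, u⟫ + ⟪h' v, v⟫ - ⟪h' v, u⟫ - ⟪h' u, v⟫ = S := by
      rw [hS, inner_sub_left, inner_sub_right, inner_sub_right]
      ring
    have h2' : h u - ⟪h' u, u⟫ ≤ h v - ⟪h' u, v⟫ - t * N + C * t ^ 2 * N := by
      rw [hnorm] at h2; exact h2
    have hre : 2 * t * (1 - C * t) * N
        = (t * N - C * t ^ 2 * N) + (t * N - C * t ^ 2 * N) := by ring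
    rw [hre]
    linarith [h1, h2', hexp]
  have hNnn : 0 ≤ N := sq_nonneg _
  have htval : t = 1 / (a + C) := ht
  have hSnn : 0 ≤ S := by
    have h2t : 0 < 2 * t * (1 - C * t) := by
      rw [htval]
      have : 1 - C * (1 / (a + C)) = a / (a + C) := by
        field_simp
        ring
      rw [this]
      positivity
    nlinarith
  -- from hsum with t = 1/(a+C): 2a N ≤ (a+C)^2 S ≤ 4a^2 S
  have hmul : 2 * a * N ≤ (a + C) ^ 2 * S := by
    have := mul_le_mul_of_nonneg_left hsum (le_of_lt (mul_pos hac hac))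
    have heq : (a + C) * (a + C) * (2 * t * (1 - C * t) * N) = 2 * a * N := by
      rw [htval]; field_simp
      ring
    nlinarith [this, heq]
  have h4 : (a + C) ^ 2 ≤ 4 * a ^ 2 := by nlinarith
  have h5 : (a + C) ^ 2 * S ≤ 4 * a ^ 2 * S := mul_le_mul_of_nonneg_right h4 hSnn
  have h6 : 2 * a * N ≤ 2 * a * (2 * a * S) := by nlinarith
  exact le_of_mul_le_mul_left h6 (by positivity)

/-- The regular (Fréchet) subdifferential of an extended-real-valued function. -/
noncomputable def hatSubdiff {n : ℕ} (φ : EuclideanSpace ℝ (Fin n) → EReal)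
    (xb : EuclideanSpace ℝ (Fin n)) : Set (EuclideanSpace ℝ (Fin n)) :=
  {v | (0 : EReal) ≤ Filter.liminf
    (fun x => (φ x - φ xb - (((inner ℝ v (x - xb) : ℝ)) : EReal)) * ((‖x - xb‖⁻¹ : ℝ) : EReal))
    (nhdsWithin xb {xb}ᶜ)}

/-- along DRS iterates (`uᵏ = prox_{γf}(sᵏ)`, `vᵏ ∈ prox_{γg}(2uᵏ − sᵏ)`,
`sᵏ⁺¹ = sᵏ + λ(vᵏ − uᵏ)`) with `γ, λ` in the admissible range, for each `k`:
`dist(0, ∂̂(f+g)(vᵏ)) ≤ ((1 − γσ_f)/γ)‖uᵏ − vᵏ‖`. -/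
theorem DRS_subdifferential_bound {n : ℕ} (f : EuclideanSpace ℝ (Fin n) → ℝ)
    (g : EuclideanSpace ℝ (Fin n) → EReal) (L σ γ lam : ℝ) (hL : 0 < L)
    (hσL : -L ≤ σ) (hσ2 : σ ≤ L)
    (hC1 : ContDiff ℝ 1 f)
    (hLip : ∀ x y, ‖gradient f x - gradient f y‖ ≤ L * ‖x - y‖)
    (hhyp : ConvexOn ℝ Set.univ (fun x => f x - σ / 2 * ‖x‖ ^ 2))
    (hgproper : ∃ x, g x ≠ ⊤) (hgbot : ∀ x, g x ≠ ⊥) (hglsc : LowerSemicontinuous g)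
    (hargmin : {x | IsMinOn (fun x => ((f x : ℝ) : EReal) + g x) Set.univ x}.Nonempty)
    (hγ0 : 0 < γ) (hγL : γ < 1 / L) (hγσ : γ * (2 * max 0 (-σ)) < 2 - lam)
    (hlam0 : 0 < lam) (hlam2 : lam < 2)
    (s u v : ℕ → EuclideanSpace ℝ (Fin n))
    (hu : ∀ k, IsMinOn (fun w => f w + 1 / (2 * γ) * ‖w - s k‖ ^ 2) Set.univ (u k))
    (hv : ∀ k, IsMinOn
      (fun w => g w + ((1 / (2 * γ) * ‖w - ((2 : ℝ) • u k - s k)‖ ^ 2 : ℝ) : EReal))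
      Set.univ (v k))
    (hs : ∀ k, s (k + 1) = s k + lam • (v k - u k)) :
    ∀ k, Metric.infDist 0 (hatSubdiff (fun x => ((f x : ℝ) : EReal) + g x) (v k))
      ≤ (1 - γ * σ) / γ * ‖u k - v k‖ := by
  intro k
  have hγne : γ ≠ 0 := ne_of_gt hγ0
  have hgL : L < 1 / γ := by
    rw [lt_div_iff₀ hγ0]
    calc L * γ < L * (1 / L) := by
          exact (mul_lt_mul_iff_right₀ hL).mpr hγL
      _ = 1 := by field_simp
  have hfd : Differentiable ℝ f := hC1.differentiable one_ne_zero
  set f' : EuclideanSpace ℝ (Fin n) → EuclideanSpace ℝ (Fin n) := gradient f with hf'def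
  have hfgrad : ∀ x, HasGradientAt f (f' x) x := fun x => (hfd x).hasGradientAt
  -- gradient of the quadratic penalty
  have hquad : ∀ (c w : EuclideanSpace ℝ (Fin n)),
      HasGradientAt (fun w => 1 / (2 * γ) * ‖w - c‖ ^ 2) ((1 / γ) • (w - c)) w := by
    intro c w
    have h1 : HasFDerivAt (fun w : EuclideanSpace ℝ (Fin n) => w - c)
        (ContinuousLinearMap.id ℝ _) w := (hasFDerivAt_id w).sub_const c
    have h3 := h1.norm_sq.const_mul (1 / (2 * γ))
    refine myHasGradientAt h3 ?_
    intro y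
    simp only [ContinuousLinearMap.coe_smul', Pi.smul_apply, ContinuousLinearMap.coe_comp',
      Function.comp_apply, ContinuousLinearMap.coe_id', id_eq, smul_eq_mul,
      ContinuousLinearMap.smul_apply, innerSL_apply_apply, real_inner_smul_left, nsmul_eq_mul]
    field_simp
    ring
  -- critical point equation for u k
  have hcrit : f' (u k) + (1 / γ) • (u k - s k) = 0 := by
    have hloc : IsLocalMin (fun w => f w + 1 / (2 * γ) * ‖w - s k‖ ^ 2) (u k) :=
      (hu k).isLocalMin Filter.univ_mem
    have hsum : HasGradientAt (fun w => f w + 1 / (2 * γ) * ‖w - s k‖ ^ 2)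
        (f' (u k) + (1 / γ) • (u k - s k)) (u k) := by
      refine myHasGradientAt ((hfgrad (u k)).hasFDerivAt.add (hquad (s k) (u k)).hasFDerivAt) ?_
      intro y
      simp only [ContinuousLinearMap.add_apply, InnerProductSpace.toDual_apply_apply, inner_add_left]
    have h0 := hloc.hasFDerivAt_eq_zero hsum.hasFDerivAt
    have := congrArg (InnerProductSpace.toDual ℝ _).symm h0
    simpa using this
  set z : EuclideanSpace ℝ (Fin n) := (2 : ℝ) • u k - s k with hzdef
  set η : EuclideanSpace ℝ (Fin n) := (1 / γ) • (z - v k) with hηdef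
  set ξ : EuclideanSpace ℝ (Fin n) := f' (v k) + η with hξdef
  have hηeq : η = (1 / γ) • (u k - v k) - f' (u k) := by
    have hb : (1 / γ) • (u k - s k) = -f' (u k) := by
      have := hcrit
      rw [add_eq_zero_iff_eq_neg] at this
      rw [this]
      simp
    have hzz : z - v k = (u k - v k) + (u k - s k) := by
      rw [hzdef]; module
    rw [hηdef, hzz, smul_add, hb]
    abel
  -- ### norm bound for ξ
  set a : ℝ := 1 / γ - σ with hadef
  have ha : 0 < a := by rw [hadef]; linarith
  have hnorm : ‖ξ‖ ≤ a * ‖u k - v k‖ := by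
    set h : EuclideanSpace ℝ (Fin n) → ℝ := fun x => f x - σ / 2 * ‖x‖ ^ 2 with hhdef
    set h' : EuclideanSpace ℝ (Fin n) → EuclideanSpace ℝ (Fin n) :=
      fun x => f' x - σ • x with hh'def
    have hgradh : ∀ x, HasGradientAt h (h' x) x := by
      intro x
      have h2 : HasFDerivAt (fun x : EuclideanSpace ℝ (Fin n) => σ / 2 * ‖x‖ ^ 2)
          ((σ / 2) • (2 • (innerSL ℝ x))) x := by
        have := (hasFDerivAt_id x).norm_sq.const_mul (σ / 2)
        simpa using this
      refine myHasGradientAt ((hfgrad x).hasFDerivAt.sub h2) ?_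
      intro y
      simp only [ContinuousLinearMap.coe_sub', Pi.sub_apply, InnerProductSpace.toDual_apply_apply,
        ContinuousLinearMap.smul_apply, innerSL_apply_apply, inner_sub_left, real_inner_smul_left,
        nsmul_eq_mul, smul_eq_mul, hh'def]
      ring
    have hdescf : ∀ x y, f y ≤ f x + ⟪f' x, y - x⟫ + L / 2 * ‖y - x‖ ^ 2 :=
      descent_lemma (le_of_lt hL) hfgrad hLip
    have hdesch : ∀ x y, h y ≤ h x + ⟪h' x, y - x⟫ + (L - σ) / 2 * ‖y - x‖ ^ 2 := by
      intro x y
      have hid : ‖y‖ ^ 2 - ‖x‖ ^ 2 - 2 * ⟪x, y - x⟫ = ‖y - x‖ ^ 2 := by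
        rw [inner_sub_right, @norm_sub_sq_real _ _ _ y x, real_inner_self_eq_norm_sq,
          real_inner_comm]
        ring
      have hf2 := hdescf x y
      simp only [hhdef, hh'def, inner_sub_left, real_inner_smul_left]
      nlinarith [hf2, hid]
    have hkey := key_cocoercive (by linarith : (0:ℝ) ≤ (L - σ) / 2) hhyp hgradh hdesch
      (by linarith : (L - σ) / 2 ≤ a) ha (u k) (v k)
    set D : EuclideanSpace ℝ (Fin n) := h' (u k) - h' (v k) with hDdef
    set e : EuclideanSpace ℝ (Fin n) := u k - v k with hedef
    have hD2 : D = (f' (u k) - f' (v k)) - σ • e := by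
      simp only [hDdef, hh'def, hedef, smul_sub]
      abel
    have hξD : ξ = a • e - D := by
      rw [hD2, hadef, sub_smul, hξdef, hηeq]
      abel
    have hsq : ‖ξ‖ ^ 2 ≤ (a * ‖e‖) ^ 2 := by
      rw [hξD, @norm_sub_sq_real _ _ _ (a • e) D]
      have h1 : ‖a • e‖ ^ 2 = a ^ 2 * ‖e‖ ^ 2 := by
        rw [norm_smul]; simp [mul_pow, sq_abs]
      have h2 : ⟪a • e, D⟫ = a * ⟪e, D⟫ := real_inner_smul_left _ _ _
      have h3 : ⟪D, u k - v k⟫ = ⟪e, D⟫ := by rw [← hedef, real_inner_comm]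
      rw [h3] at hkey
      rw [h1, h2]
      nlinarith [hkey]
    have := Real.sqrt_le_sqrt hsq
    rwa [Real.sqrt_sq (norm_nonneg _), Real.sqrt_sq (by positivity)] at this
  -- ### membership of ξ in the subdifferential
  set F : EuclideanSpace ℝ (Fin n) → EReal := fun x => ((f x : ℝ) : EReal) + g x with hFdef
  -- g (v k) is finite
  have hvmin : ∀ x, g (v k) + ((1 / (2 * γ) * ‖v k - z‖ ^ 2 : ℝ) : EReal)
      ≤ g x + ((1 / (2 * γ) * ‖x - z‖ ^ 2 : ℝ) : EReal) := fun x => (hv k) (Set.mem_univ x)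
  have hgvtop : g (v k) ≠ ⊤ := by
    obtain ⟨x0, hx0⟩ := hgproper
    intro htop
    have h1 := hvmin x0
    rw [htop, EReal.top_add_of_ne_bot (EReal.coe_ne_bot _)] at h1
    have h2 : g x0 + ((1 / (2 * γ) * ‖x0 - z‖ ^ 2 : ℝ) : EReal) < ⊤ :=
      EReal.add_lt_top hx0 (EReal.coe_ne_top _)
    exact absurd (top_le_iff.mp h1) (ne_of_lt h2)
  set gv : ℝ := (g (v k)).toReal with hgvdef
  have hgv : g (v k) = ((gv : ℝ) : EReal) := (EReal.coe_toReal hgvtop (hgbot _)).symm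
  -- real-valued minimality inequality
  have hvreal : ∀ (x : EuclideanSpace ℝ (Fin n)) (r : ℝ), g x = (r : EReal) →
      gv + 1 / (2 * γ) * ‖v k - z‖ ^ 2 ≤ r + 1 / (2 * γ) * ‖x - z‖ ^ 2 := by
    intro x r hr
    have h1 := hvmin x
    rw [hgv, hr, ← EReal.coe_add, ← EReal.coe_add] at h1
    exact_mod_cast h1
  -- lower bound for the g-part
  have hglower : ∀ (x : EuclideanSpace ℝ (Fin n)) (r : ℝ), g x = (r : EReal) →
      gv + ⟪η, x - v k⟫ - 1 / (2 * γ) * ‖x - v k‖ ^ 2 ≤ r := by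
    intro x r hr
    have h1 := hvreal x r hr
    have hxz : ‖x - z‖ ^ 2 = ‖x - v k‖ ^ 2 + 2 * ⟪x - v k, v k - z⟫ + ‖v k - z‖ ^ 2 := by
      have : x - z = (x - v k) + (v k - z) := by abel
      rw [this, @norm_add_sq_real _ _ _ (x - v k) (v k - z)]
    have hη2 : ⟪η, x - v k⟫ = -((1 / γ) * ⟪x - v k, v k - z⟫) := by
      rw [hηdef, real_inner_smul_left, real_inner_comm]
      have : v k - z = -(z - v k) := by abel
      rw [this, inner_neg_right]
      ring
    rw [hη2]
    rw [hxz] at h1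
    have e : 1 / (2 * γ) * (‖x - v k‖ ^ 2 + 2 * ⟪x - v k, v k - z⟫ + ‖v k - z‖ ^ 2)
        = 1 / (2 * γ) * ‖x - v k‖ ^ 2 + 1 / γ * ⟪x - v k, v k - z⟫
          + 1 / (2 * γ) * ‖v k - z‖ ^ 2 := by
      field_simp
    linarith [h1, e]
  -- lower bound for the f-part
  have hflower : ∀ x, f (v k) + ⟪f' (v k), x - v k⟫ - L / 2 * ‖x - v k‖ ^ 2 ≤ f x := by
    intro x
    have hneggrad : ∀ w, HasGradientAt (fun w => -f w) (-f' w) w := by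
      intro w
      refine myHasGradientAt (hfgrad w).hasFDerivAt.neg ?_
      intro y
      simp [InnerProductSpace.toDual_apply_apply, inner_neg_left]
    have hneglip : ∀ x y : EuclideanSpace ℝ (Fin n), ‖-f' x - -f' y‖ ≤ L * ‖x - y‖ := by
      intro x y
      have : -f' x - -f' y = -(f' x - f' y) := by abel
      rw [this, norm_neg]
      exact hLip x y
    have := descent_lemma (le_of_lt hL) hneggrad hneglip (v k) x
    simp only [inner_neg_left] at this
    linarith
  set cst : ℝ := L / 2 + 1 / (2 * γ) with hcstdef
  have hmem : ξ ∈ hatSubdiff F (v k) := by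
    unfold hatSubdiff
    rw [Set.mem_setOf_eq]
    have hFv : F (v k) = ((f (v k) + gv : ℝ) : EReal) := by
      rw [hFdef]
      simp only []
      rw [hgv, ← EReal.coe_add]
    have hev : ∀ᶠ x in nhdsWithin (v k) {v k}ᶜ,
        ((-cst * ‖x - v k‖ : ℝ) : EReal) ≤
          (F x - F (v k) - (((inner ℝ ξ (x - v k) : ℝ)) : EReal)) * ((‖x - v k‖⁻¹ : ℝ) : EReal) := by
      filter_upwards [self_mem_nhdsWithin] with x hx
      have hxne : x ≠ v k := hx
      have hpos : 0 < ‖x - v k‖ := by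
        rw [norm_pos_iff, sub_ne_zero]; exact hxne
      by_cases hgx : g x = ⊤
      · have hFx : F x = ⊤ := by
          rw [hFdef]; simp only []; rw [hgx, EReal.coe_add_top]
        rw [hFx, hFv, EReal.top_sub_coe, EReal.top_sub_coe,
          EReal.top_mul_coe_of_pos (by positivity)]
        exact le_top
      · set r : ℝ := (g x).toReal with hrdef
        have hgxr : g x = ((r : ℝ) : EReal) := (EReal.coe_toReal hgx (hgbot x)).symm
        have hFx : F x = ((f x + r : ℝ) : EReal) := by
          rw [hFdef]; simp only []; rw [hgxr, ← EReal.coe_add]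
        rw [hFx, hFv, ← EReal.coe_sub, ← EReal.coe_sub, ← EReal.coe_mul,
          EReal.coe_le_coe_iff]
        have hA : -cst * ‖x - v k‖ ^ 2 ≤ f x + r - (f (v k) + gv) - ⟪ξ, x - v k⟫ := by
          have h1 := hglower x r hgxr
          have h2 := hflower x
          have h3 : ⟪ξ, x - v k⟫ = ⟪f' (v k), x - v k⟫ + ⟪η, x - v k⟫ := by
            rw [hξdef, inner_add_left]
          rw [h3, hcstdef]
          nlinarith [h1, h2]
        calc -cst * ‖x - v k‖
            = -cst * ‖x - v k‖ ^ 2 * ‖x - v k‖⁻¹ := by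
              field_simp
          _ ≤ (f x + r - (f (v k) + gv) - ⟪ξ, x - v k⟫) * ‖x - v k‖⁻¹ :=
              mul_le_mul_of_nonneg_right hA (by positivity)
    refine le_trans ?_ (Filter.liminf_le_liminf hev)
    rcases Nat.eq_zero_or_pos n with hn | hn
    · have hempty : ({v k}ᶜ : Set (EuclideanSpace ℝ (Fin n))) = ∅ := by
        ext x
        simp only [Set.mem_compl_iff, Set.mem_singleton_iff, Set.mem_empty_iff_false,
          iff_false, not_not]
        subst hn
        ext i
        exact absurd i.2 (Nat.not_lt_zero _)
      rw [hempty, nhdsWithin_empty, Filter.liminf_bot]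
      exact le_top
    · haveI : Nontrivial (EuclideanSpace ℝ (Fin n)) := by
        refine ⟨⟨(WithLp.toLp 2 (fun _ => 1) : EuclideanSpace ℝ (Fin n)), 0, ?_⟩⟩
        intro hcontra
        have := congrArg (fun w : EuclideanSpace ℝ (Fin n) => w ⟨0, hn⟩) hcontra
        norm_num at this
      haveI := Module.punctured_nhds_neBot ℝ (EuclideanSpace ℝ (Fin n)) (v k)
      have h1 : Filter.Tendsto (fun x : EuclideanSpace ℝ (Fin n) => -cst * ‖x - v k‖)
          (nhdsWithin (v k) {v k}ᶜ) (nhds 0) := by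
        have hc : Continuous (fun x : EuclideanSpace ℝ (Fin n) => -cst * ‖x - v k‖) :=
          continuous_const.mul ((continuous_id.sub continuous_const).norm)
        have := (hc.tendsto (v k)).mono_left (nhdsWithin_le_nhds (s := ({v k}ᶜ : Set (EuclideanSpace ℝ (Fin n)))))
        simpa using this
      have h2 : Filter.Tendsto (fun x : EuclideanSpace ℝ (Fin n) =>
          ((-cst * ‖x - v k‖ : ℝ) : EReal)) (nhdsWithin (v k) {v k}ᶜ) (nhds (0 : EReal)) := by
        have := (continuous_coe_real_ereal.tendsto 0).comp h1
        simpa [Function.comp_def] using this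
      rw [h2.liminf_eq]
  -- ### conclusion
  have hfinal : Metric.infDist 0 (hatSubdiff F (v k)) ≤ dist (0 : EuclideanSpace ℝ (Fin n)) ξ :=
    Metric.infDist_le_dist_of_mem hmem
  rw [dist_zero_left] at hfinal
  have haval : (1 - γ * σ) / γ = a := by
    rw [hadef]; field_simp
  rw [haval]
  calc Metric.infDist 0 (hatSubdiff F (v k)) ≤ ‖ξ‖ := hfinal
    _ ≤ a * ‖u k - v k‖ := hnorm
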